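/- Let f, g ∈ ℂ[z,z⁻¹]. Then f is equicorrelational to g if and only if f·f̄ and g·ḡ are ℂ[z,z⁻¹]-associates. -/

import Mathlib

open LaurentPolynomial
open scoped Classical

/-- The length of a Laurent polynomial: 1 plus the difference between the maximal and
minimal exponents occurring with nonzero coefficient; the length of 0 is 0. -/
noncomputable def len {F : Type*} [Field F] (f : LaurentPolynomial F) : ℤ :=
  if h : f = 0 then 0
  else f.coeff.support.max' (Finsupp.support_nonempty_iff.mpr
      (fun h' => h (congrArg AddMonoidAlgebra.ofCoeff h')))
     - f.coeff.support.min' (Finsupp.support_nonempty_iff.mpr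
      (fun h' => h (congrArg AddMonoidAlgebra.ofCoeff h'))) + 1

/-- Substitution `f(z) ↦ f(z^m)`: the image of `f` under the ring homomorphism
sending `z` to `z^m`. -/
noncomputable def subst {F : Type*} [Field F] (m : ℤ) (f : LaurentPolynomial F) :
    LaurentPolynomial F :=
  AddMonoidAlgebra.mapDomainRingHom F (AddMonoidHom.mulLeft m) f

/-- The subring `F[z,z⁻¹]` of `E[z,z⁻¹]` consisting of Laurent polynomials all of whose
coefficients lie in the subfield `F` of `E`. -/
noncomputable def LRing {E : Type*} [Field E] (F : Subfield E) :
    Subring (LaurentPolynomial E) where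
  carrier := {f : LaurentPolynomial E | ∀ n : ℤ, f.coeff n ∈ F}
  zero_mem' := fun n => F.zero_mem
  one_mem' := by
    intro n
    rw [AddMonoidAlgebra.one_def, AddMonoidAlgebra.coeff_single, Finsupp.single_apply]
    split_ifs
    · exact F.one_mem
    · exact F.zero_mem
  add_mem' := by
    intro f g hf hg n
    rw [AddMonoidAlgebra.coeff_add, Finsupp.add_apply]
    exact add_mem (hf n) (hg n)
  neg_mem' := by
    intro f hf n
    rw [AddMonoidAlgebra.coeff_neg, Finsupp.neg_apply]
    exact neg_mem (hf n)
  mul_mem' := by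
    intro f g hf hg n
    rw [AddMonoidAlgebra.mul_apply]
    refine sum_mem fun a ha => sum_mem fun b hb => ?_
    dsimp only
    split_ifs
    · exact mul_mem (hf a) (hg b)
    · exact zero_mem F

/-- The conjugate of `f(z) = Σ f_j z^j`, namely `f̄(z) = Σ conj(f_j) z^{-j}`. -/
noncomputable def lconj (f : LaurentPolynomial ℂ) : LaurentPolynomial ℂ :=
  AddMonoidAlgebra.ofCoeff
    (Finsupp.equivMapDomain (Equiv.neg ℤ) (Finsupp.mapRange (starRingEnd ℂ) (map_zero _) f.coeff))

/-- `f` and `g` are equicorrelational: `f·f̄ = c·g·ḡ` for some positive real `c`. -/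
def Equicorrelational (f g : LaurentPolynomial ℂ) : Prop :=
  ∃ c : ℝ, 0 < c ∧ f * lconj f = C (c : ℂ) * (g * lconj g)

/-- `f` and `g` are trivially equicorrelational: `g` is a `ℂ[z,z⁻¹]`-associate of `f`
or of `f̄`. -/
def TrivEquicorrelational (f g : LaurentPolynomial ℂ) : Prop :=
  Associated g f ∨ Associated g (lconj f)

/-- A generalized palindrome: `f̄` is a `ℂ[z,z⁻¹]`-associate of `f`. -/
def GenPalindrome (f : LaurentPolynomial ℂ) : Prop :=
  Associated (lconj f) f

/-- `g` is an `F[z,z⁻¹]`-associate of `f`: `g = u·f` for some unit `u` of the subring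
`F[z,z⁻¹]` of `ℂ[z,z⁻¹]`. -/
def FAssoc (F : Subfield ℂ) (g f : LaurentPolynomial ℂ) : Prop :=
  ∃ u : (LRing F)ˣ, g = ((u : LRing F) : LaurentPolynomial ℂ) * f

/-- The `F[z,z⁻¹]`-associate class of `f`. -/
def facl (F : Subfield ℂ) (f : LaurentPolynomial ℂ) : Set (LaurentPolynomial ℂ) :=
  {g | FAssoc F g f}

/-- The `F`-trivial equicorrelationality class of `f`: all elements of `F[z,z⁻¹]`
that are trivially equicorrelational to `f`. -/
def fte (F : Subfield ℂ) (f : LaurentPolynomial ℂ) : Set (LaurentPolynomial ℂ) :=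
  {g | g ∈ LRing F ∧ TrivEquicorrelational f g}

/-- A `k`-ary sequence: a Laurent polynomial whose support is a segment of consecutive
integers and whose nonzero coefficients are complex `k`-th roots of unity. -/
def IsKary (k : ℕ) (f : LaurentPolynomial ℂ) : Prop :=
  (∀ i j l : ℤ, i ≤ j → j ≤ l → f.coeff i ≠ 0 → f.coeff l ≠ 0 → f.coeff j ≠ 0) ∧
  ∀ n : ℤ, f.coeff n ≠ 0 → (f.coeff n) ^ k = 1

/-- A binary sequence: a Laurent polynomial whose support is a segment of consecutive
integers and whose nonzero coefficients all lie in `{1, -1}`. -/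
def IsBinary (f : LaurentPolynomial ℂ) : Prop :=
  (∀ i j l : ℤ, i ≤ j → j ≤ l → f.coeff i ≠ 0 → f.coeff l ≠ 0 → f.coeff j ≠ 0) ∧
  ∀ n : ℤ, f.coeff n ≠ 0 → f.coeff n = 1 ∨ f.coeff n = -1

lemma lconj_apply (f : LaurentPolynomial ℂ) (n : ℤ) :
    (lconj f).coeff n = (starRingEnd ℂ) (f.coeff (-n)) := by
  simp [lconj, Finsupp.equivMapDomain_apply, Finsupp.mapRange_apply]

@[simp] lemma lconj_zero : lconj 0 = 0 := by
  ext n; simp [lconj_apply]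

lemma lconj_add (f g : LaurentPolynomial ℂ) : lconj (f + g) = lconj f + lconj g := by
  ext n
  rw [lconj_apply, AddMonoidAlgebra.coeff_add, Finsupp.add_apply, AddMonoidAlgebra.coeff_add,
    Finsupp.add_apply, map_add, lconj_apply, lconj_apply]

lemma lconj_single (n : ℤ) (a : ℂ) :
    lconj (AddMonoidAlgebra.single n a) = AddMonoidAlgebra.single (-n) ((starRingEnd ℂ) a) := by
  ext m
  rw [lconj_apply, AddMonoidAlgebra.coeff_single, AddMonoidAlgebra.coeff_single,
    Finsupp.single_apply, Finsupp.single_apply, apply_ite (starRingEnd ℂ),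
    map_zero]
  congr 1
  simp only [eq_iff_iff]
  omega

lemma lconj_lconj (f : LaurentPolynomial ℂ) : lconj (lconj f) = f := by
  ext n; simp [lconj_apply]

lemma lconj_eq_zero {f : LaurentPolynomial ℂ} : lconj f = 0 ↔ f = 0 := by
  constructor
  · intro h
    have := congrArg lconj h
    rwa [lconj_lconj, lconj_zero] at this
  · rintro rfl; simp

lemma lconj_single_mul (n : ℤ) (a : ℂ) (g : LaurentPolynomial ℂ) :
    lconj (AddMonoidAlgebra.single n a * g) =
      lconj (AddMonoidAlgebra.single n a) * lconj g := by
  induction g using AddMonoidAlgebra.induction_linear with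
  | zero => rw [mul_zero, lconj_zero, mul_zero]
  | add p q hp hq => rw [mul_add, lconj_add, hp, hq, lconj_add, mul_add]
  | single m b =>
      rw [AddMonoidAlgebra.single_mul_single, lconj_single, lconj_single, lconj_single,
        AddMonoidAlgebra.single_mul_single, neg_add, map_mul]

lemma lconj_mul (f g : LaurentPolynomial ℂ) : lconj (f * g) = lconj f * lconj g := by
  induction f using AddMonoidAlgebra.induction_linear with
  | zero => rw [zero_mul, lconj_zero, zero_mul]
  | add p q hp hq => rw [add_mul, lconj_add, hp, hq, lconj_add, add_mul]
  | single m b => exact lconj_single_mul m b g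

lemma coeff_zero_mul_lconj (f : LaurentPolynomial ℂ) :
    (f * lconj f).coeff 0 = ((∑ j ∈ f.coeff.support, Complex.normSq (f.coeff j) : ℝ) : ℂ) := by
  rw [AddMonoidAlgebra.mul_apply]
  simp only [Finsupp.sum]
  push_cast
  refine Finset.sum_congr rfl fun j hj => ?_
  have h1 : ∀ k : ℤ, (if j + k = 0 then f.coeff j * (lconj f).coeff k else 0)
      = if k = -j then f.coeff j * (lconj f).coeff k else 0 := fun k => by
    congr 1
    simp only [eq_iff_iff]; omega
  calc ∑ k ∈ (lconj f).coeff.support, (if j + k = 0 then f.coeff j * (lconj f).coeff k else 0)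
      = ∑ k ∈ (lconj f).coeff.support, (if k = -j then f.coeff j * (lconj f).coeff k else 0) :=
        Finset.sum_congr rfl fun k _ => h1 k
    _ = if -j ∈ (lconj f).coeff.support then f.coeff j * (lconj f).coeff (-j) else 0 :=
        Finset.sum_ite_eq' _ _ _
    _ = ((Complex.normSq (f.coeff j) : ℝ) : ℂ) := by
        have hj' : f.coeff j ≠ 0 := Finsupp.mem_support_iff.mp hj
        have hmem : -j ∈ (lconj f).coeff.support := by
          rw [Finsupp.mem_support_iff, lconj_apply, neg_neg]
          simpa using hj'
        rw [if_pos hmem, lconj_apply, neg_neg]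
        exact Complex.mul_conj (f.coeff j)

lemma coeff_zero_pos {f : LaurentPolynomial ℂ} (hf : f ≠ 0) :
    ∃ r : ℝ, 0 < r ∧ (f * lconj f).coeff 0 = (r : ℂ) := by
  refine ⟨∑ j ∈ f.coeff.support, Complex.normSq (f.coeff j), ?_, coeff_zero_mul_lconj f⟩
  obtain ⟨j, hj⟩ := Finsupp.support_nonempty_iff.mpr (AddMonoidAlgebra.coeff_eq_zero.not.mpr hf)
  exact Finset.sum_pos' (fun i _ => Complex.normSq_nonneg _)
    ⟨j, hj, Complex.normSq_pos.mpr (Finsupp.mem_support_iff.mp hj)⟩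

lemma unit_is_single {u : LaurentPolynomial ℂ} (hu : IsUnit u) :
    ∃ (n : ℤ) (a : ℂ), a ≠ 0 ∧ u = (AddMonoidAlgebra.single n a : LaurentPolynomial ℂ) := by
  obtain ⟨v, huv⟩ := hu.exists_right_inv
  obtain ⟨n₁, p, hp⟩ := LaurentPolynomial.exists_T_pow u
  obtain ⟨n₂, q, hq⟩ := LaurentPolynomial.exists_T_pow v
  have hpq : p * q = Polynomial.X ^ (n₁ + n₂) := by
    apply Polynomial.toLaurent_injective
    rw [map_mul, hp, hq, Polynomial.toLaurent_X_pow]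
    calc u * T (n₁ : ℤ) * (v * T (n₂ : ℤ))
        = u * v * (T (n₁ : ℤ) * T (n₂ : ℤ)) := by ring
      _ = T ((n₁ : ℤ) + (n₂ : ℤ)) := by rw [huv, one_mul, ← T_add]
      _ = T ((n₁ + n₂ : ℕ) : ℤ) := by push_cast; ring_nf
  have hpdvd : p ∣ (Polynomial.X : Polynomial ℂ) ^ (n₁ + n₂) := ⟨q, hpq.symm⟩
  obtain ⟨i, -, hassoc⟩ := (dvd_prime_pow Polynomial.prime_X _).mp hpdvd
  obtain ⟨w, hw⟩ := hassoc.symm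
  obtain ⟨r, hr, hCr⟩ := Polynomial.isUnit_iff.mp w.isUnit
  have hu' : u = Polynomial.toLaurent p * T (-(n₁ : ℤ)) := by
    rw [hp, mul_T_assoc, add_neg_cancel, T_zero, mul_one]
  rw [← hw, ← hCr] at hu'
  refine ⟨(i : ℤ) - (n₁ : ℤ), r, hr.ne_zero, ?_⟩
  rw [single_eq_C_mul_T, hu', map_mul, Polynomial.toLaurent_X_pow, Polynomial.toLaurent_C,
    T_sub]
  ring


theorem stmt8 (f g : LaurentPolynomial ℂ) :
    Equicorrelational f g ↔ Associated (f * lconj f) (g * lconj g) := by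
  constructor
  · rintro ⟨c, hc, heq⟩
    have hcne : (c : ℂ) ≠ 0 := Complex.ofReal_ne_zero.mpr hc.ne'
    have hC : IsUnit (C (c : ℂ)) := (isUnit_iff_ne_zero.mpr hcne).map C
    refine Associated.symm ⟨hC.unit, ?_⟩
    rw [IsUnit.unit_spec, heq]
    ring
  · rintro ⟨u, hu⟩
    by_cases hf : f = 0
    · subst hf
      rw [lconj_zero, mul_zero, zero_mul] at hu
      have hg : g * lconj g = 0 := hu.symm
      have hg0 : g = 0 := by
        rcases mul_eq_zero.mp hg with h | h
        · exact h
        · exact lconj_eq_zero.mp h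
      subst hg0
      exact ⟨1, one_pos, by simp⟩
    · have hffbar : f * lconj f ≠ 0 := mul_ne_zero hf (fun h => hf (lconj_eq_zero.mp h))
      have hg : g ≠ 0 := by
        rintro rfl
        rw [lconj_zero, mul_zero] at hu
        rcases mul_eq_zero.mp hu with h | h
        · exact hffbar h
        · exact u.ne_zero h
      have hconj : f * lconj f * lconj ↑u = g * lconj g := by
        have h := congrArg lconj hu
        rw [lconj_mul, lconj_mul, lconj_mul, lconj_lconj, lconj_lconj] at h
        linear_combination h
      have hueq : lconj ↑u = (↑u : LaurentPolynomial ℂ) :=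
        mul_left_cancel₀ hffbar (hconj.trans hu.symm)
      obtain ⟨n, a, ha, hus⟩ := unit_is_single u.isUnit
      rw [hus, lconj_single] at hueq
      rcases AddMonoidAlgebra.single_inj.mp hueq with ⟨hn, hconja⟩ | ⟨h1, -⟩
      · have hn0 : n = 0 := by omega
        subst hn0
        have hus2 : (↑u : LaurentPolynomial ℂ) = C a := by
          rw [hus, single_eq_C_mul_T, T_zero, mul_one]
        have hCa : (C a : LaurentPolynomial ℂ) = AddMonoidAlgebra.single (0 : ℤ) a := by
          rw [single_eq_C_mul_T, T_zero, mul_one]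
        obtain ⟨rf, hrf, hf0⟩ := coeff_zero_pos hf
        obtain ⟨rg, hrg, hg0⟩ := coeff_zero_pos hg
        have hcoeff : (f * lconj f * ↑u).coeff 0 = (g * lconj g).coeff 0 := by rw [hu]
        rw [hus2, hCa, AddMonoidAlgebra.coeff_mul_single_zero, hf0, hg0] at hcoeff
        have haval : a = ((rg / rf : ℝ) : ℂ) := by
          push_cast
          rw [eq_div_iff (Complex.ofReal_ne_zero.mpr hrf.ne')]
          linear_combination hcoeff
        refine ⟨rf / rg, div_pos hrf hrg, ?_⟩
        rw [← hu, hus2]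
        have hone : (C ((rf / rg : ℝ) : ℂ)) * (C a : LaurentPolynomial ℂ) = 1 := by
          rw [← map_mul]
          have hx : ((rf / rg : ℝ) : ℂ) * a = 1 := by
            have h1 : (rf : ℂ) ≠ 0 := Complex.ofReal_ne_zero.mpr hrf.ne'
            have h2 : (rg : ℂ) ≠ 0 := Complex.ofReal_ne_zero.mpr hrg.ne'
            rw [haval]
            push_cast
            rw [div_mul_div_comm, div_eq_one_iff_eq (mul_ne_zero h2 h1)]
            ring
          rw [hx, map_one]
        linear_combination (-(f * lconj f)) * hone
      · exact absurd h1 (by simpa using ha)
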